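/- Let p ≥ 5 be a prime and let a and l be integers with 2 ≤ a ≤ p-1 and 1 ≤ l ≤ a. Then s(ap, ap - l(p-1)) ≡ C(a,l)·s(p,1)^l (mod p^2), where C(a,l) denotes the binomial coefficient a choose l. -/

import Mathlib

open Polynomial Finset

/-- Product of terms `f + c i * d` where the `c i` multiply to zero. -/
lemma aux_prod_nilp {R : Type*} [CommRing R] (f d : R) (c : ℕ → R)
    (h : ∀ i j, c i * c j = 0) :
    ∀ a : ℕ, ∏ i ∈ Finset.range a, (f + c i * d) =
      f ^ a + (∑ i ∈ Finset.range a, c i) * (f ^ (a - 1) * d)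
  | 0 => by simp
  | (n+1) => by
    rw [Finset.prod_range_succ, aux_prod_nilp f d c h n, Finset.sum_range_succ]
    cases n with
    | zero => simp
    | succ m =>
      have key : (∑ i ∈ Finset.range (m+1), c i) * c (m+1) = 0 := by
        rw [Finset.sum_mul]; exact Finset.sum_eq_zero fun i _ => h i (m+1)
      simp only [Nat.add_sub_cancel]
      linear_combination (f ^ m * d ^ 2) * key

lemma aux_pow_nilp {R : Type*} [CommRing R] (x e : R) (he : e * e = 0) (n : ℕ) :
    (x + e) ^ n = x ^ n + (n : R) * (x ^ (n - 1) * e) := by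
  have := aux_prod_nilp x 1 (fun _ => e) (fun _ _ => he) n
  rw [Finset.prod_const, Finset.sum_const, nsmul_eq_mul, Finset.card_range, mul_one, mul_one] at this; rw [this]; ring

lemma aux_X_add_C_pow {R : Type*} [CommRing R] (c : R) (hc : c * c = 0) (n : ℕ) :
    (X + C c : R[X]) ^ n = X ^ n + C ((n : R) * c) * X ^ (n - 1) := by
  have hcc : (C c : R[X]) * C c = 0 := by rw [← C_mul, hc, C_0]
  rw [aux_pow_nilp (X : R[X]) (C c) hcc n, C_mul, C_eq_natCast]
  ring

lemma aux_comp_nilp {R : Type*} [CommRing R] (c : R) (hc : c * c = 0) (g : R[X]) :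
    g.comp (X + C c) = g + C c * derivative g := by
  induction g using Polynomial.induction_on' with
  | add p q hp hq => rw [add_comp, hp, hq, derivative_add]; ring
  | monomial n t =>
    rw [← C_mul_X_pow_eq_monomial, mul_comp, C_comp, pow_comp, X_comp,
      aux_X_add_C_pow c hc n, derivative_C_mul, derivative_X_pow, C_mul, C_eq_natCast]
    ring

lemma asc_eq_prod (S : Type*) [CommRing S] (n : ℕ) :
    ascPochhammer S n = ∏ i ∈ Finset.range n, (X + C (i : S)) := by
  induction n with
  | zero => simp
  | succ m ih =>
    rw [ascPochhammer_succ_right, ih, Finset.prod_range_succ, C_eq_natCast]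

lemma asc_mul_prod (S : Type*) [CommRing S] (m : ℕ) :
    ∀ a : ℕ, ascPochhammer S (a * m) =
      ∏ i ∈ Finset.range a, (ascPochhammer S m).comp (X + C ((i * m : ℕ) : S))
  | 0 => by simp
  | (n+1) => by
    rw [Finset.prod_range_succ, ← asc_mul_prod S m n, C_eq_natCast,
      show (n+1) * m = n * m + m by ring, ← ascPochhammer_mul]

lemma asc_zmod_eq (p : ℕ) [Fact p.Prime] :
    ascPochhammer (ZMod p) p = X ^ p - X := by
  classical
  have hp : p.Prime := Fact.out
  have hcard : Fintype.card (ZMod p) = p := ZMod.card p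
  -- X^p - X = ∏ over all elements (X - C a)
  have hmonic : (X ^ p - X : (ZMod p)[X]).Monic := by
    apply monic_X_pow_sub
    calc degree (X : (ZMod p)[X]) ≤ 1 := degree_X_le
    _ < (p : WithBot ℕ) := by exact_mod_cast Nat.one_lt_cast.mpr hp.one_lt
  have hroots : (X ^ p - X : (ZMod p)[X]).roots = Finset.univ.val := by
    have := FiniteField.roots_X_pow_card_sub_X (ZMod p)
    rwa [hcard] at this
  have hdeg : (X ^ p - X : (ZMod p)[X]).natDegree = p := by
    have := FiniteField.X_pow_card_sub_X_natDegree_eq (ZMod p) hp.one_lt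
    exact this
  have hsplit := prod_multiset_X_sub_C_of_monic_of_roots_card_eq hmonic
    (by rw [hroots, hdeg]; simp)
  rw [hroots] at hsplit
  have huniv : (Finset.univ.val.map fun a : ZMod p => X - C a).prod
      = ∏ a : ZMod p, (X - C a) := rfl
  rw [huniv] at hsplit
  -- now relate ascPochhammer to the product
  rw [asc_eq_prod, ← hsplit]
  -- ∏ i in range p, (X + C i) = ∏ a : ZMod p, (X - C a)
  rw [← Equiv.prod_comp (Equiv.neg (ZMod p)) (fun a => (X - C a : (ZMod p)[X]))]
  simp only [Equiv.neg_apply, map_neg, sub_neg_eq_add]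
  exact Finset.prod_nbij (fun i => (i : ZMod p))
    (fun i _ => Finset.mem_univ _)
    (fun i hi j hj hij => by
      have hi' := Finset.mem_range.mp hi
      have hj' := Finset.mem_range.mp hj
      have := congrArg ZMod.val hij
      rwa [ZMod.val_natCast_of_lt hi', ZMod.val_natCast_of_lt hj'] at this)
    (fun b _ => ⟨b.val, Finset.mem_range.mpr (ZMod.val_lt b), by simp⟩)
    (fun i _ => rfl)

lemma expandPowAux {S : Type*} [CommRing S] (q n : ℕ) :
    ((X:S[X])^(q+1) - X)^n
      = ∑ k ∈ Finset.range (n+1), C ((-1:S)^(n-k) * (n.choose k : S)) * X^(n + q*k) := by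
  have h1 : ((X:S[X])^(q+1) - X) = X * ((X:S[X])^q + C (-1)) := by
    rw [map_neg, C_1]; ring
  rw [h1, mul_pow, add_pow, Finset.mul_sum]
  refine Finset.sum_congr rfl fun k hk => ?_
  rw [map_mul, map_pow, map_neg, C_1, C_eq_natCast, ← pow_mul]
  ring

lemma coeff_expand_hit {S : Type*} [CommRing S] (q n t : ℕ) (hq : 0 < q) (ht : t ≤ n) :
    (((X:S[X])^(q+1) - X)^n).coeff (n + q*t) = (-1:S)^(n-t) * (n.choose t : S) := by
  rw [expandPowAux, finset_sum_coeff]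
  rw [Finset.sum_eq_single t]
  · rw [coeff_C_mul, coeff_X_pow, if_pos rfl, mul_one]
  · intro k hk hkt
    rw [coeff_C_mul, coeff_X_pow, if_neg, mul_zero]
    intro hEq
    exact hkt (Nat.eq_of_mul_eq_mul_left hq (by omega)).symm
  · intro h; exact absurd (Finset.mem_range.mpr (by omega)) h

lemma coeff_expand_miss {S : Type*} [CommRing S] (q n M : ℕ)
    (h : ∀ k, k ≤ n → n + q*k ≠ M) :
    (((X:S[X])^(q+1) - X)^n).coeff M = 0 := by
  rw [expandPowAux, finset_sum_coeff]
  refine Finset.sum_eq_zero fun k hk => ?_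
  rw [coeff_C_mul, coeff_X_pow, if_neg, mul_zero]
  exact fun hEq => h k (by have := Finset.mem_range.mp hk; omega) hEq.symm

lemma coeff_expand_mul {S : Type*} [CommRing S] (q n : ℕ) (E : S[X]) (N : ℕ) :
    ((((X:S[X])^(q+1) - X)^n) * E).coeff N
      = ∑ k ∈ Finset.range (n+1), (-1:S)^(n-k) * (n.choose k : S) *
          (if n + q*k ≤ N then E.coeff (N - (n+q*k)) else 0) := by
  rw [expandPowAux, Finset.sum_mul, finset_sum_coeff]
  refine Finset.sum_congr rfl fun k hk => ?_
  rw [mul_assoc, coeff_C_mul, mul_comm (X ^ (n + q * k) : S[X]) E, coeff_mul_X_pow']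

lemma zmod_sq_cast_zero {p : ℕ} [NeZero p] (x : ZMod (p^2))
    (hx : ZMod.castHom (dvd_pow_self p two_ne_zero) (ZMod p) x = 0) :
    ∃ m : ℕ, x = ((p * m : ℕ) : ZMod (p^2)) := by
  have hne : NeZero (p^2) := ⟨pow_ne_zero 2 (NeZero.ne p)⟩
  rw [ZMod.castHom_apply] at hx
  have h1 : ((x.val : ℕ) : ZMod p) = 0 := by
    rw [ZMod.natCast_val]
    exact hx
  obtain ⟨m, hm⟩ := (ZMod.natCast_eq_zero_iff _ _).mp h1
  exact ⟨m, by rw [← hm, ZMod.natCast_val, ZMod.cast_id]⟩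

lemma zmod_sq_p_mul {p : ℕ} [NeZero p] (x : ZMod (p^2))
    (hx : ZMod.castHom (dvd_pow_self p two_ne_zero) (ZMod p) x = 0) :
    (p : ZMod (p^2)) * x = 0 := by
  obtain ⟨m, rfl⟩ := zmod_sq_cast_zero x hx
  push_cast
  rw [← mul_assoc, ← Nat.cast_mul, ← pow_two, ZMod.natCast_self, zero_mul]

lemma zmod_sq_mul {p : ℕ} [NeZero p] (x y : ZMod (p^2))
    (hx : ZMod.castHom (dvd_pow_self p two_ne_zero) (ZMod p) x = 0)
    (hy : ZMod.castHom (dvd_pow_self p two_ne_zero) (ZMod p) y = 0) :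
    x * y = 0 := by
  obtain ⟨m, rfl⟩ := zmod_sq_cast_zero x hx
  obtain ⟨k, rfl⟩ := zmod_sq_cast_zero y hy
  push_cast
  have : (p : ZMod (p^2)) * p = 0 := by
    rw [← Nat.cast_mul, ← pow_two, ZMod.natCast_self]
  calc (p : ZMod (p^2)) * m * ((p : ZMod (p^2)) * k)
      = ((p : ZMod (p^2)) * p) * (m * k) := by ring
    _ = 0 := by rw [this, zero_mul]

lemma coeff_expand_hit' {S : Type*} [CommRing S] (P q n t : ℕ) (hP : P = q + 1)
    (hq : 0 < q) (ht : t ≤ n) :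
    (((X:S[X])^P - X)^n).coeff (n + q*t) = (-1:S)^(n-t) * (n.choose t : S) := by
  subst hP; exact coeff_expand_hit q n t hq ht

lemma coeff_expand_miss' {S : Type*} [CommRing S] (P q n M : ℕ) (hP : P = q + 1)
    (h : ∀ k, k ≤ n → n + q*k ≠ M) :
    (((X:S[X])^P - X)^n).coeff M = 0 := by
  subst hP; exact coeff_expand_miss q n M h

lemma coeff_expand_mul' {S : Type*} [CommRing S] (P q n : ℕ) (hP : P = q + 1) (E : S[X]) (N : ℕ) :
    ((((X:S[X])^P - X)^n) * E).coeff N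
      = ∑ k ∈ Finset.range (n+1), (-1:S)^(n-k) * (n.choose k : S) *
          (if n + q*k ≤ N then E.coeff (N - (n+q*k)) else 0) := by
  subst hP; exact coeff_expand_mul q n E N


/-- The (unsigned) Stirling number of the first kind `s(n,k)`, defined by
`x(x+1)(x+2)⋯(x+n-1) = Σ_{k=0}^{n} s(n,k) x^k`. -/
noncomputable def stirlingFirst (n k : ℕ) : ℕ := (ascPochhammer ℕ n).coeff k

theorem stmt18 (p a l : ℕ) (hp : p.Prime) (hp5 : 5 ≤ p)
    (ha2 : 2 ≤ a) (ha : a ≤ p - 1) (hl1 : 1 ≤ l) (hl2 : l ≤ a) :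
    stirlingFirst (a * p) (a * p - l * (p - 1)) ≡
      Nat.choose a l * (stirlingFirst p 1) ^ l [MOD p ^ 2] := by
  have pp : Fact p.Prime := ⟨hp⟩
  have hpne : NeZero p := ⟨hp.pos.ne'⟩
  obtain ⟨q, hpq, hq4, haq⟩ : ∃ q, p = q + 1 ∧ 4 ≤ q ∧ a ≤ q := ⟨p - 1, by omega, by omega, by omega⟩
  set R := ZMod (p^2) with hR
  set φ := ZMod.castHom (dvd_pow_self p two_ne_zero) (ZMod p) with hphi
  set f : R[X] := ascPochhammer R p with hf
  have hfc : ∀ k, f.coeff k = ((stirlingFirst p k : ℕ) : R) := by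
    intro k
    rw [hf, ← ascPochhammer_map (Nat.castRingHom R) p, coeff_map]
    rfl
  have hmapf : f.map φ = X ^ p - X := by
    rw [hf, ascPochhammer_map φ p, asc_zmod_eq p]
  set E : R[X] := f - (X ^ p - X) with hE
  have hfE : f = (X ^ p - X) + E := by rw [hE]; ring
  have hEmap : E.map φ = 0 := by
    rw [hE, Polynomial.map_sub, Polynomial.map_sub, Polynomial.map_pow, map_X, hmapf, sub_self]
  have hEc : ∀ k, φ (E.coeff k) = 0 := fun k => by
    rw [← coeff_map, hEmap, coeff_zero]
  have hE2 : E * E = 0 := by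
    ext n
    rw [coeff_mul, coeff_zero]
    exact Finset.sum_eq_zero fun x _ => zmod_sq_mul _ _ (hEc x.1) (hEc x.2)
  -- coefficient facts about E
  have hEtop : ∀ k, p ≤ k → E.coeff k = 0 := by
    intro k hk
    rw [hE, coeff_sub, coeff_sub, hfc, coeff_X_pow, coeff_X]
    rcases eq_or_lt_of_le hk with h | h
    · have h1 : stirlingFirst p k = 1 := by
        unfold stirlingFirst
        have h2 := (monic_ascPochhammer ℕ p).coeff_natDegree
        rw [ascPochhammer_natDegree] at h2
        rw [← h]; exact h2
      rw [h1, if_pos h.symm, if_neg (by omega)]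
      push_cast; ring
    · have h1 : stirlingFirst p k = 0 := by
        unfold stirlingFirst
        apply coeff_eq_zero_of_natDegree_lt
        rwa [ascPochhammer_natDegree]
      rw [h1, if_neg (by omega), if_neg (by omega)]
      push_cast; ring
  have hE1 : E.coeff 1 = (stirlingFirst p 1 : R) + 1 := by
    rw [hE, coeff_sub, coeff_sub, hfc, coeff_X_pow, coeff_X,
      if_neg (by omega), if_pos rfl]
    ring
  set w : R := (stirlingFirst p 1 : R) + 1 with hw
  have hw2 : w * w = 0 := by
    have h1 : φ w = 0 := by rw [← hE1]; exact hEc 1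
    exact zmod_sq_mul _ _ h1 h1
  clear_value f E w
  -- the decomposition of ascPochhammer R (a*p)
  have hc : ∀ i j : ℕ, ((i*p : ℕ) : R) * ((j*p : ℕ) : R) = 0 := by
    intro i j
    have hpp : (p:R)*(p:R) = 0 := by
      rw [← Nat.cast_mul, ← pow_two]; exact ZMod.natCast_self _
    push_cast
    calc (i:R) * p * ((j:R) * p) = (i:R) * (j:R) * ((p:R)*(p:R)) := by ring
    _ = 0 := by rw [hpp, mul_zero]
  have hcC : ∀ i j : ℕ, (C ((i*p:ℕ):R)) * (C ((j*p:ℕ):R)) = 0 := fun i j => by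
    rw [← C_mul, hc, C_0]
  have hdecomp : ascPochhammer R (a*p)
      = f ^ a + (∑ i ∈ Finset.range a, C ((i*p:ℕ):R)) * (f ^ (a-1) * derivative f) := by
    rw [hf, asc_mul_prod R p a,
      Finset.prod_congr rfl (fun i _ => aux_comp_nilp _ (hc i i) (ascPochhammer R p)),
      aux_prod_nilp (ascPochhammer R p) (derivative (ascPochhammer R p)) _ hcC a]
  have hKN : a * p - l * (p-1) = a + q * (a - l) := by
    have e2 : q*(a-l) + q*l = q*a := by rw [← Nat.mul_add]; congr 1; omega
    have e1 : a * p = a + q * a := by rw [hpq]; ring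
    have e3 : l * (p-1) = q * l := by rw [hpq, Nat.add_sub_cancel, Nat.mul_comm]
    rw [e3, e1, ← e2, ← add_assoc, Nat.add_sub_cancel]
  -- the vanishing term
  have hterm2 : ((∑ i ∈ Finset.range a, C ((i*p:ℕ):R)) * (f ^ (a-1) * derivative f)).coeff
      (a + q*(a-l)) = 0 := by
    have hsum : (∑ i ∈ Finset.range a, C ((i*p:ℕ):R))
        = C (((∑ i ∈ Finset.range a, i) * p : ℕ) : R) := by
      rw [← map_sum]
      congr 1
      push_cast [Finset.sum_mul]
      exact (Nat.cast_sum _ _).symm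
    rw [hsum, coeff_C_mul]
    have hphi0 : φ ((f ^ (a-1) * derivative f).coeff (a + q*(a-l))) = 0 := by
      rw [← coeff_map, Polynomial.map_mul, Polynomial.map_pow, hmapf,
        ← derivative_map, hmapf]
      have hder : derivative ((X:(ZMod p)[X])^p - X) = -1 := by
        rw [derivative_sub, derivative_X_pow, derivative_X]
        simp
      rw [hder, mul_neg_one, coeff_neg, neg_eq_zero]
      apply coeff_expand_miss' p q _ _ hpq
      intro k hk hEq
      have h1 : q ∣ q*k := dvd_mul_right q k
      have h2 : q ∣ q*(a-l) := dvd_mul_right q (a-l)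
      have h3 : q*k = q*(a-l) + 1 := by omega
      have h4 : q ∣ 1 := (Nat.dvd_add_right h2).mp (h3 ▸ h1)
      have := Nat.le_of_dvd one_pos h4
      omega
    push_cast
    show (((∑ i ∈ Finset.range a, i) * p : ℕ) : ZMod (p^2)) * _ = 0
    rw [Nat.cast_mul, mul_assoc, zmod_sq_p_mul _ hphi0, mul_zero]
  -- the main term
  have hpow : f ^ a = (X^p - X:R[X])^a + (a : R[X]) * ((X^p - X:R[X])^(a-1) * E) := by
    rw [hfE]
    exact aux_pow_nilp ((X:R[X])^p - X) E hE2 a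
  have hhit : ((X^p - X:R[X])^a).coeff (a + q*(a-l)) = (-1:R)^l * (a.choose (a-l) : R) := by
    rw [coeff_expand_hit' p q a (a-l) hpq (by omega) (by omega)]
    congr 2
    omega
  have hmul : (((X^p - X:R[X])^(a-1)) * E).coeff (a + q*(a-l))
      = (-1:R)^(l-1) * ((a-1).choose (a-l) : R) * w := by
    rw [coeff_expand_mul' p q (a-1) hpq]
    rw [Finset.sum_eq_single (a-l)]
    · have hle : (a-1) + q*(a-l) ≤ a + q*(a-l) := by omega
      rw [if_pos hle, show a + q*(a-l) - ((a-1) + q*(a-l)) = 1 by omega, hE1,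
        show (a-1) - (a-l) = l - 1 by omega]
    · intro k hk hne
      have hk' : k ≤ a - 1 := by have := Finset.mem_range.mp hk; omega
      rcases lt_or_gt_of_ne hne with hlt | hgt
      · -- k < a - l : coefficient of E beyond degree
        have h5 : q*k + q ≤ q*(a-l) := by
          have h6 := Nat.mul_le_mul_left q (show k+1 ≤ a-l by omega)
          rw [Nat.mul_add, mul_one] at h6
          omega
        rw [if_pos (by omega)]
        have harg : a + q*(a-l) - ((a-1)+q*k) = 1 + (q*(a-l) - q*k) := by omega
        rw [harg, hEtop _ (by omega), mul_zero]
      · -- k > a - l : exponent too big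
        have hbig : q*(a-l) + q ≤ q*k := by
          have h5 := Nat.mul_le_mul_left q (show a-l+1 ≤ k by omega)
          rw [Nat.mul_add, mul_one] at h5
          omega
        rw [if_neg (by omega), mul_zero]
    · intro habs; exact absurd (Finset.mem_range.mpr (by omega)) habs
  -- assemble
  rw [← ZMod.natCast_eq_natCast_iff]
  push_cast
  have hLHS : ((stirlingFirst (a*p) (a*p - l*(p-1)) : ℕ) : R)
      = (ascPochhammer R (a*p)).coeff (a + q*(a-l)) := by
    rw [hKN]
    show ((ascPochhammer ℕ (a*p)).coeff _ : R) = _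
    rw [← ascPochhammer_map (Nat.castRingHom R) (a*p), coeff_map]
    rfl
  rw [hLHS, hdecomp, coeff_add, hterm2, add_zero, hpow, coeff_add, hhit,
    ← C_eq_natCast, coeff_C_mul, hmul]
  -- right-hand side expansion
  have hspow : ((stirlingFirst p 1 : ℕ) : R) ^ l
      = (-1:R)^l + (l:R) * ((-1:R)^(l-1) * w) := by
    have h := aux_pow_nilp (-1 : R) w hw2 l
    rw [show ((stirlingFirst p 1 : ℕ) : R) = -1 + w by rw [hw]; ring, h]
  rw [hspow]
  -- combinatorial identities
  have hch1 : ((a.choose (a-l) : ℕ) : R) = ((a.choose l : ℕ) : R) := by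
    rw [Nat.choose_symm hl2]
  have hch2 : ((a : ℕ) : R) * (((a-1).choose (a-l) : ℕ) : R)
      = ((a.choose l : ℕ) : R) * ((l : ℕ) : R) := by
    have h1 : (a-1).choose (a-l) = (a-1).choose (l-1) := by
      have h2 := Nat.choose_symm (show l-1 ≤ a-1 by omega)
      rwa [show (a-1)-(l-1) = a-l by omega] at h2
    have h3 := Nat.add_one_mul_choose_eq (a-1) (l-1)
    simp only [Nat.succ_eq_add_one, show a-1+1 = a by omega, show l-1+1 = l by omega] at h3
    rw [h1, ← Nat.cast_mul, h3]
    push_cast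
    ring
  linear_combination ((-1:R)^l) * hch1 + ((-1:R)^(l-1) * w) * hch2
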